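/- A field K is real closed if and only if K is not algebraically closed, char(K) ≠ 2, and every irreducible polynomial in K[X] has degree at most 2. -/

import Mathlib

open Polynomial IntermediateField Module

section AuxRC

variable {K : Type*} [Field K]

private lemma RC.two_ne_zero_of_ringChar (h : ringChar K ≠ 2) : (2 : K) ≠ 0 := by
  intro h2
  have hd : ringChar K ∣ 2 := (ringChar.spec K 2).mp (by exact_mod_cast h2)
  rcases (Nat.dvd_prime Nat.prime_two).1 hd with h1 | h1
  · have : ((1 : ℕ) : K) = 0 := (ringChar.spec K 1).mpr (h1 ▸ dvd_refl _)
    simp at this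
  · exact h h1

private lemma RC.exists_nonsquare (hna : ¬ IsAlgClosed K) (h2 : (2:K) ≠ 0)
    (hdeg : ∀ f : K[X], Irreducible f → f.natDegree ≤ 2) : ∃ a : K, ¬ ∃ x : K, x^2 = a := by
  by_contra h
  push_neg at h
  apply hna
  apply IsAlgClosed.of_exists_root
  intro p hm hirr
  have hle := hdeg p hirr
  have hpos := hirr.natDegree_pos
  interval_cases hd : p.natDegree
  · refine ⟨-(p.coeff 0), ?_⟩
    rw [hm.eq_X_add_C hd]
    simp
  · obtain ⟨s, hs⟩ := h ((p.coeff 1)^2 - 4 * p.coeff 0)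
    refine ⟨(s - p.coeff 1)/2, ?_⟩
    have hev : p.eval ((s - p.coeff 1)/2) =
        p.coeff 0 + p.coeff 1 * ((s - p.coeff 1)/2) + p.coeff 2 * ((s - p.coeff 1)/2)^2 := by
      rw [eval_eq_sum_range, hd]
      simp [Finset.sum_range_succ]
    have hc2 : p.coeff 2 = 1 := by
      have := hm.coeff_natDegree
      rwa [hd] at this
    rw [hev, hc2]
    field_simp
    linear_combination hs

private lemma RC.neg_sq_of_nonsquare (hdeg : ∀ f : K[X], Irreducible f → f.natDegree ≤ 2)
    {a : K} (ha : ¬ ∃ x : K, x ^ 2 = a) : ∃ q : K, -a = q ^ 2 := by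
  set Kb := AlgebraicClosure K
  have hinj : Function.Injective (algebraMap K Kb) := (algebraMap K Kb).injective
  obtain ⟨b, hb⟩ := IsAlgClosed.exists_pow_nat_eq (algebraMap K Kb a) (n := 4) (by norm_num)
  have hint : IsIntegral K b := Algebra.IsIntegral.isIntegral b
  have hbr : b ∉ (algebraMap K Kb).range := by
    rintro ⟨x, rfl⟩
    refine ha ⟨x ^ 2, hinj ?_⟩
    rw [← hb]
    push_cast [map_pow]
    ring
  have hirr := minpoly.irreducible hint
  have hmon := minpoly.monic hint
  have hd2 : (minpoly K b).natDegree = 2 := by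
    have h1 := hdeg _ hirr
    have h2 := (minpoly.two_le_natDegree_iff hint).mpr hbr
    omega
  set p := (minpoly K b).coeff 1 with hp
  set q := (minpoly K b).coeff 0 with hq
  have hc2 : (minpoly K b).coeff 2 = 1 := by
    have := hmon.coeff_natDegree
    rwa [hd2] at this
  have hev : b ^ 2 + algebraMap K Kb p * b + algebraMap K Kb q = 0 := by
    have h0 := minpoly.aeval K b
    rw [aeval_eq_sum_range, hd2] at h0
    simp [Finset.sum_range_succ, Algebra.smul_def, hc2] at h0
    rw [← h0]
    ring
  have key : algebraMap K Kb (2*p*q - p^3) * b = algebraMap K Kb (a - (q^2 - p^2*q)) := by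
    push_cast [map_sub, map_mul, map_pow, map_ofNat]
    linear_combination hb - (b^2 - algebraMap K Kb p * b + ((algebraMap K Kb p)^2 - algebraMap K Kb q)) * hev
  have hz : 2*p*q - p^3 = 0 := by
    by_contra hne
    refine hbr ⟨(a - (q^2 - p^2*q))/(2*p*q - p^3), ?_⟩
    rw [map_div₀, ← key, mul_comm, mul_div_assoc,
      div_self (by simpa using fun hh => hne (hinj (by simpa using hh))), mul_one]
  have haq : a = q^2 - p^2*q := by
    apply hinj
    rw [hz] at key
    simpa [map_sub, sub_eq_zero] using key.symm
  rcases eq_or_ne p 0 with hp0 | hp0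
  · exact absurd ⟨q, by rw [haq, hp0]; ring⟩ ha
  · have h2q : p^2 = 2*q := by
      have : p * (2*q - p^2) = 0 := by linear_combination hz
      rcases mul_eq_zero.mp this with h | h
      · exact absurd h hp0
      · linear_combination -h
    exact ⟨q, by rw [haq]; linear_combination q * h2q⟩

private lemma RC.no_sqrt_neg_one (hna : ¬ IsAlgClosed K) (h2 : (2:K) ≠ 0)
    (hdeg : ∀ f : K[X], Irreducible f → f.natDegree ≤ 2) : ¬ ∃ x : K, x ^ 2 = -1 := by
  rintro ⟨i, hi⟩
  obtain ⟨a, ha⟩ := RC.exists_nonsquare hna h2 hdeg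
  obtain ⟨q, hq⟩ := RC.neg_sq_of_nonsquare hdeg ha
  exact ha ⟨i * q, by linear_combination q^2 * hi + hq⟩

private lemma RC.sep_of_deg_le_two (h2 : (2:K) ≠ 0)
    (hdeg : ∀ f : K[X], Irreducible f → f.natDegree ≤ 2) :
    Algebra.IsSeparable K (AlgebraicClosure K) := by
  refine ⟨fun x => ?_⟩
  have hint : IsIntegral K x := Algebra.IsIntegral.isIntegral x
  have hirr := minpoly.irreducible hint
  have hmon := minpoly.monic hint
  show (minpoly K x).Separable
  rw [separable_iff_derivative_ne_zero hirr]
  intro hder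
  have hcases : (minpoly K x).natDegree = 1 ∨ (minpoly K x).natDegree = 2 := by
    have := hdeg _ hirr
    have := minpoly.natDegree_pos hint
    omega
  have hlead := hmon.coeff_natDegree
  rcases hcases with hd | hd
  · rw [hd] at hlead
    have hc := coeff_derivative (minpoly K x) 0
    rw [hder, hlead] at hc
    simp at hc
  · rw [hd] at hlead
    have hc := coeff_derivative (minpoly K x) 1
    rw [hder, hlead] at hc
    simp at hc
    norm_num at hc
    exact h2 hc.symm

private lemma RC.adjoin_i_eq_top
    (hdeg : ∀ f : K[X], Irreducible f → f.natDegree ≤ 2)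
    (hsep : Algebra.IsSeparable K (AlgebraicClosure K))
    (hns : ¬ ∃ x : K, x ^ 2 = -1)
    (i : AlgebraicClosure K) (hi : i ^ 2 = -1) :
    IntermediateField.adjoin K {i} = ⊤ := by
  have hinj : Function.Injective (algebraMap K (AlgebraicClosure K)) :=
    (algebraMap K (AlgebraicClosure K)).injective
  have hint_i : IsIntegral K i := Algebra.IsIntegral.isIntegral i
  have hir : i ∉ (algebraMap K (AlgebraicClosure K)).range := by
    rintro ⟨x, rfl⟩
    refine hns ⟨x, hinj ?_⟩
    rw [map_pow, hi, map_neg, map_one]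
  have hdvd : minpoly K i ∣ (X ^ 2 + 1 : K[X]) :=
    minpoly.dvd _ _ (by simp [hi])
  have hX21 : (X ^ 2 + 1 : K[X]) ≠ 0 := by
    have := X_pow_add_C_ne_zero (n := 2) (by norm_num) (1 : K)
    simpa using this
  have hd21 : (X ^ 2 + 1 : K[X]).natDegree = 2 := by
    have := natDegree_X_pow_add_C (n := 2) (r := (1 : K))
    simpa using this
  have hmi : (minpoly K i).natDegree = 2 := by
    have hle : (minpoly K i).natDegree ≤ 2 := hd21 ▸ Polynomial.natDegree_le_of_dvd hdvd hX21
    have hge := (minpoly.two_le_natDegree_iff hint_i).mpr hir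
    omega
  have hfr : finrank K (adjoin K {i}) = 2 := by
    rw [IntermediateField.adjoin.finrank hint_i, hmi]
  rw [eq_top_iff]
  rintro y -
  set E := adjoin K ({i, y} : Set (AlgebraicClosure K)) with hE
  haveI : Finite ({i, y} : Set (AlgebraicClosure K)) := Set.Finite.to_subtype (Set.toFinite _)
  haveI : FiniteDimensional K E :=
    IntermediateField.finiteDimensional_adjoin (fun x _ => Algebra.IsIntegral.isIntegral x)
  obtain ⟨α, hα⟩ := Field.exists_primitive_element K E
  have hαint : IsIntegral K α := Algebra.IsIntegral.isIntegral α
  have hminα : minpoly K α = minpoly K (algebraMap E (AlgebraicClosure K) α) :=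
    (minpoly.algebraMap_eq (algebraMap E (AlgebraicClosure K)).injective α).symm
  have hfrE : finrank K E ≤ 2 := by
    have h1 : finrank K E = (minpoly K α).natDegree := by
      rw [← IntermediateField.adjoin.finrank hαint, hα, IntermediateField.finrank_top']
    rw [h1, hminα]
    exact hdeg _ (minpoly.irreducible (Algebra.IsIntegral.isIntegral _))
  have hle : adjoin K {i} ≤ E := by
    apply IntermediateField.adjoin.mono
    simp [Set.singleton_subset_iff]
  have heq : adjoin K {i} = E :=
    IntermediateField.eq_of_le_of_finrank_le hle (by rw [hfr]; exact hfrE)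
  have hyE : y ∈ E := IntermediateField.subset_adjoin K _ (by simp)
  rw [heq]
  exact hyE

private lemma RC.forward_deg
    (h2 : ∀ i : AlgebraicClosure K, i ^ 2 = -1 → IntermediateField.adjoin K {i} = ⊤)
    (f : K[X]) (hf : Irreducible f) : f.natDegree ≤ 2 := by
  obtain ⟨i, hi⟩ := IsAlgClosed.exists_pow_nat_eq (k := AlgebraicClosure K) (-1) (n := 2) (by norm_num)
  have htop := h2 i hi
  have hint_i : IsIntegral K i := Algebra.IsIntegral.isIntegral i
  haveI hfd1 : FiniteDimensional K (adjoin K ({i} : Set (AlgebraicClosure K))) :=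
    IntermediateField.adjoin.finiteDimensional hint_i
  haveI hfd2 : FiniteDimensional K (⊤ : IntermediateField K (AlgebraicClosure K)) := htop ▸ hfd1
  haveI hfd : FiniteDimensional K (AlgebraicClosure K) :=
    (IntermediateField.topEquiv (F := K) (E := AlgebraicClosure K)).toLinearEquiv.finiteDimensional
  have hbound : finrank K (AlgebraicClosure K) ≤ 2 := by
    have e1 : finrank K (adjoin K ({i} : Set (AlgebraicClosure K))) = (minpoly K i).natDegree :=
      IntermediateField.adjoin.finrank hint_i
    have hdvd : minpoly K i ∣ (X ^ 2 + 1 : K[X]) := minpoly.dvd _ _ (by simp [hi])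
    have hX21 : (X ^ 2 + 1 : K[X]) ≠ 0 := by
      have := X_pow_add_C_ne_zero (n := 2) (by norm_num) (1 : K)
      simpa using this
    have hd21 : (X ^ 2 + 1 : K[X]).natDegree = 2 := by
      have := natDegree_X_pow_add_C (n := 2) (r := (1 : K))
      simpa using this
    have hle : (minpoly K i).natDegree ≤ 2 := hd21 ▸ Polynomial.natDegree_le_of_dvd hdvd hX21
    calc finrank K (AlgebraicClosure K)
        = finrank K (⊤ : IntermediateField K (AlgebraicClosure K)) :=
          (IntermediateField.finrank_top' (F := K) (E := AlgebraicClosure K)).symm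
      _ = finrank K (adjoin K ({i} : Set (AlgebraicClosure K))) := by rw [htop]
      _ ≤ 2 := e1 ▸ hle
  have hdeg0 : f.degree ≠ 0 := by
    intro h
    exact hf.not_isUnit (Polynomial.isUnit_iff_degree_eq_zero.mpr h)
  obtain ⟨r, hr⟩ := IsAlgClosed.exists_aeval_eq_zero (AlgebraicClosure K) f hdeg0
  have hint_r : IsIntegral K r := Algebra.IsIntegral.isIntegral r
  have hdvd := minpoly.dvd K r hr
  obtain ⟨c, hc⟩ := hdvd
  have hdf : f.natDegree = (minpoly K r).natDegree := by
    rcases hf.isUnit_or_isUnit hc with hu | hu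
    · exact absurd hu (minpoly.not_isUnit K r)
    · have hc0 : c.natDegree = 0 := Polynomial.natDegree_eq_zero_of_isUnit hu
      have hfne : minpoly K r ≠ 0 := minpoly.ne_zero hint_r
      have hcne : c ≠ 0 := hu.ne_zero
      rw [hc, Polynomial.natDegree_mul hfne hcne, hc0, add_zero]
  rw [hdf, ← IntermediateField.adjoin.finrank hint_r]
  calc finrank K (adjoin K ({r} : Set (AlgebraicClosure K))) ≤ finrank K (AlgebraicClosure K) :=
        Submodule.finrank_le (adjoin K ({r} : Set (AlgebraicClosure K))).toSubmodule
    _ ≤ 2 := hbound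

end AuxRC

/-- A field `K` is real closed iff `√-1 ∉ K` and `K(√-1)` is algebraically closed
(within a fixed algebraic closure, `K(√-1)` being the whole algebraic closure). -/
def RealClosed (K : Type*) [Field K] : Prop :=
  (¬ ∃ x : K, x ^ 2 = -1) ∧
  ∀ i : AlgebraicClosure K, i ^ 2 = -1 → IntermediateField.adjoin K {i} = ⊤

theorem stmt_17 (K : Type*) [Field K] :
    RealClosed K ↔
      (¬ IsAlgClosed K ∧ ringChar K ≠ 2 ∧
        ∀ f : Polynomial K, Irreducible f → f.natDegree ≤ 2) := by
  constructor
  · rintro ⟨h1, h2⟩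
    refine ⟨?_, ?_, RC.forward_deg h2⟩
    · intro hac
      obtain ⟨x, hx⟩ := IsAlgClosed.exists_pow_nat_eq (k := K) (-1) (n := 2) (by norm_num)
      exact h1 ⟨x, hx⟩
    · intro hch
      haveI : CharP K 2 := hch ▸ ringChar.charP K
      have h20 : (2 : K) = 0 := by exact_mod_cast CharP.cast_eq_zero K 2
      exact h1 ⟨1, by linear_combination h20⟩
  · rintro ⟨hna, hch, hdeg⟩
    have h2 : (2 : K) ≠ 0 := RC.two_ne_zero_of_ringChar hch
    have hns : ¬ ∃ x : K, x ^ 2 = -1 := RC.no_sqrt_neg_one hna h2 hdeg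
    have hsep : Algebra.IsSeparable K (AlgebraicClosure K) := RC.sep_of_deg_le_two h2 hdeg
    exact ⟨hns, RC.adjoin_i_eq_top hdeg hsep hns⟩
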